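/- The quotient algebra ℚ[s,t,x]/(s² − 2t, s·t, x⁴ − s·x³ + t·x²) is a 12-dimensional ℚ-vector space, with basis given by the images of the twelve elements x^j, s·x^j, t·x^j for 0 ≤ j ≤ 3. -/

import Mathlib

set_option maxHeartbeats 1000000
set_option synthInstance.maxHeartbeats 400000

open MvPolynomial

/-- The ring `ℚ[s,t,x]/(s² - 2t, st, x⁴ - sx³ + tx²)`, with `s = X 0`, `t = X 1`, `x = X 2`. -/
noncomputable abbrev HopfRing : Type :=
  MvPolynomial (Fin 3) ℚ ⧸
    Ideal.span {(X 0 ^ 2 - 2 * X 1 : MvPolynomial (Fin 3) ℚ), X 0 * X 1,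
      X 2 ^ 4 - X 0 * X 2 ^ 3 + X 1 * X 2 ^ 2}

namespace HopfAux

noncomputable abbrev Ih : Ideal (MvPolynomial (Fin 3) ℚ) :=
  Ideal.span {(X 0 ^ 2 - 2 * X 1 : MvPolynomial (Fin 3) ℚ), X 0 * X 1,
    X 2 ^ 4 - X 0 * X 2 ^ 3 + X 1 * X 2 ^ 2}

noncomputable abbrev HR : Type := MvPolynomial (Fin 3) ℚ ⧸ Ih

noncomputable def sq : HR := Ideal.Quotient.mk Ih (X 0)
noncomputable def tq : HR := Ideal.Quotient.mk Ih (X 1)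
noncomputable def xq : HR := Ideal.Quotient.mk Ih (X 2)

lemma hs2 : sq ^ 2 = 2 * tq := by
  have h : Ideal.Quotient.mk Ih (X 0 ^ 2 - 2 * X 1) = 0 :=
    Ideal.Quotient.eq_zero_iff_mem.mpr
      (Ideal.subset_span (Set.mem_insert _ _))
  rw [map_sub, map_pow, map_mul, map_ofNat, sub_eq_zero] at h
  simpa [sq, tq] using h

lemma hst : sq * tq = 0 := by
  have h : Ideal.Quotient.mk Ih (X 0 * X 1) = 0 :=
    Ideal.Quotient.eq_zero_iff_mem.mpr
      (Ideal.subset_span (Set.mem_insert_of_mem _ (Set.mem_insert _ _)))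
  rw [map_mul] at h
  simpa [sq, tq] using h

lemma hx4 : xq ^ 4 = sq * xq ^ 3 - tq * xq ^ 2 := by
  have h : Ideal.Quotient.mk Ih (X 2 ^ 4 - X 0 * X 2 ^ 3 + X 1 * X 2 ^ 2) = 0 :=
    Ideal.Quotient.eq_zero_iff_mem.mpr
      (Ideal.subset_span (Set.mem_insert_of_mem _ (Set.mem_insert_of_mem _ rfl)))
  rw [map_add, map_sub, map_pow, map_mul, map_mul, map_pow, map_pow] at h
  rw [show (Ideal.Quotient.mk Ih (X 2) : HR) = xq from rfl] at h
  rw [show (Ideal.Quotient.mk Ih (X 0) : HR) = sq from rfl] at h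
  rw [show (Ideal.Quotient.mk Ih (X 1) : HR) = tq from rfl] at h
  linear_combination h

lemma htt : tq * tq = 0 := by
  have h : (2 : HR) * (tq * tq) = 0 := by linear_combination sq * hst - tq * hs2
  rw [show (2 : HR) = algebraMap ℚ HR 2 from (map_ofNat _ 2).symm, ← Algebra.smul_def] at h
  have h2 := congrArg (fun z => (2⁻¹ : ℚ) • z) h
  simpa [smul_smul] using h2

noncomputable def v : Fin 3 × Fin 4 → HR :=
  fun p => Ideal.Quotient.mk Ih ((![1, X 0, X 1] p.1) * X 2 ^ (p.2 : ℕ))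

lemma v_eq (a : Fin 3) (j : Fin 4) : v (a, j) = ![1, sq, tq] a * xq ^ (j : ℕ) := by
  fin_cases a <;> simp [v, sq, tq, xq, map_mul, map_pow]

lemma mem_W (k : Fin 3 × Fin 4) : v k ∈ Submodule.span ℚ (Set.range v) :=
  Submodule.subset_span ⟨k, rfl⟩

lemma span_v : ⊤ ≤ Submodule.span ℚ (Set.range v) := by
  set W := Submodule.span ℚ (Set.range v) with hW
  -- closure under multiplication by the generators
  have key : ∀ (a : Fin 3) (j : Fin 4) (i : Fin 3),
      v (a, j) * Ideal.Quotient.mk Ih (X i) ∈ W := by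
    intro a j i
    fin_cases i
    · -- multiply by s
      fin_cases a
      · show v (0, j) * Ideal.Quotient.mk Ih (X 0) ∈ W
        have e : v (0, j) * Ideal.Quotient.mk Ih (X 0) = v (1, j) := by
          rw [v_eq, v_eq]; show (1 * xq ^ (j:ℕ)) * sq = sq * xq ^ (j:ℕ); ring
        rw [e]; exact mem_W _
      · show v (1, j) * Ideal.Quotient.mk Ih (X 0) ∈ W
        have e : v (1, j) * Ideal.Quotient.mk Ih (X 0) = v (2, j) + v (2, j) := by
          rw [v_eq, v_eq]
          show (sq * xq ^ (j:ℕ)) * sq = tq * xq ^ (j:ℕ) + tq * xq ^ (j:ℕ)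
          linear_combination xq ^ (j:ℕ) * hs2
        rw [e]; exact W.add_mem (mem_W _) (mem_W _)
      · show v (2, j) * Ideal.Quotient.mk Ih (X 0) ∈ W
        have e : v (2, j) * Ideal.Quotient.mk Ih (X 0) = 0 := by
          rw [v_eq]
          show (tq * xq ^ (j:ℕ)) * sq = 0
          linear_combination xq ^ (j:ℕ) * hst
        rw [e]; exact W.zero_mem
    · -- multiply by t
      fin_cases a
      · show v (0, j) * Ideal.Quotient.mk Ih (X 1) ∈ W
        have e : v (0, j) * Ideal.Quotient.mk Ih (X 1) = v (2, j) := by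
          rw [v_eq, v_eq]; show (1 * xq ^ (j:ℕ)) * tq = tq * xq ^ (j:ℕ); ring
        rw [e]; exact mem_W _
      · show v (1, j) * Ideal.Quotient.mk Ih (X 1) ∈ W
        have e : v (1, j) * Ideal.Quotient.mk Ih (X 1) = 0 := by
          rw [v_eq]
          show (sq * xq ^ (j:ℕ)) * tq = 0
          linear_combination xq ^ (j:ℕ) * hst
        rw [e]; exact W.zero_mem
      · show v (2, j) * Ideal.Quotient.mk Ih (X 1) ∈ W
        have e : v (2, j) * Ideal.Quotient.mk Ih (X 1) = 0 := by
          rw [v_eq]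
          show (tq * xq ^ (j:ℕ)) * tq = 0
          linear_combination xq ^ (j:ℕ) * htt
        rw [e]; exact W.zero_mem
    · -- multiply by x
      fin_cases j
      · show v (a, 0) * Ideal.Quotient.mk Ih (X 2) ∈ W
        have e : ∀ a, v (a, 0) * Ideal.Quotient.mk Ih (X 2) = v (a, 1) := by
          intro a; rw [v_eq, v_eq]; show (_ * xq ^ 0) * xq = _ * xq ^ 1; ring
        rw [e]; exact mem_W _
      · show v (a, 1) * Ideal.Quotient.mk Ih (X 2) ∈ W
        have e : ∀ a, v (a, 1) * Ideal.Quotient.mk Ih (X 2) = v (a, 2) := by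
          intro a; rw [v_eq, v_eq]; show (_ * xq ^ 1) * xq = _ * xq ^ 2; ring
        rw [e]; exact mem_W _
      · show v (a, 2) * Ideal.Quotient.mk Ih (X 2) ∈ W
        have e : ∀ a, v (a, 2) * Ideal.Quotient.mk Ih (X 2) = v (a, 3) := by
          intro a; rw [v_eq, v_eq]; show (_ * xq ^ 2) * xq = _ * xq ^ 3; ring
        rw [e]; exact mem_W _
      · fin_cases a
        · show v (0, 3) * Ideal.Quotient.mk Ih (X 2) ∈ W
          have e : v (0, 3) * Ideal.Quotient.mk Ih (X 2) = v (1, 3) - v (2, 2) := by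
            rw [v_eq, v_eq, v_eq]
            show (1 * xq ^ 3) * xq = sq * xq ^ 3 - tq * xq ^ 2
            linear_combination hx4
          rw [e]; exact W.sub_mem (mem_W _) (mem_W _)
        · show v (1, 3) * Ideal.Quotient.mk Ih (X 2) ∈ W
          have e : v (1, 3) * Ideal.Quotient.mk Ih (X 2) = v (2, 3) + v (2, 3) := by
            rw [v_eq, v_eq]
            show (sq * xq ^ 3) * xq = tq * xq ^ 3 + tq * xq ^ 3
            linear_combination sq * hx4 + xq ^ 3 * hs2 - xq ^ 2 * hst
          rw [e]; exact W.add_mem (mem_W _) (mem_W _)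
        · show v (2, 3) * Ideal.Quotient.mk Ih (X 2) ∈ W
          have e : v (2, 3) * Ideal.Quotient.mk Ih (X 2) = 0 := by
            rw [v_eq]
            show (tq * xq ^ 3) * xq = 0
            linear_combination tq * hx4 + xq ^ 3 * hst - xq ^ 2 * htt
          rw [e]; exact W.zero_mem
  have mulX : ∀ (i : Fin 3), ∀ z ∈ W, z * Ideal.Quotient.mk Ih (X i) ∈ W := by
    intro i z hz
    have hle : Submodule.map (LinearMap.mulRight ℚ (Ideal.Quotient.mk Ih (X i))) W ≤ W := by
      rw [hW, Submodule.map_span, Submodule.span_le]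
      rintro _ ⟨_, ⟨⟨a, j⟩, rfl⟩, rfl⟩
      exact key a j i
    exact hle ⟨z, hz, rfl⟩
  intro z _
  obtain ⟨p, rfl⟩ := Ideal.Quotient.mk_surjective z
  induction p using MvPolynomial.induction_on with
  | C a =>
      have e : Ideal.Quotient.mk Ih (C a) = a • v (0, 0) := by
        simp only [v, Matrix.cons_val_zero, one_mul, Fin.val_zero, pow_zero, map_one]
        rw [show (C a : MvPolynomial (Fin 3) ℚ) = a • 1 from by
          rw [MvPolynomial.smul_eq_C_mul, mul_one]]
        exact Submodule.Quotient.mk_smul _ a 1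
      rw [e]; exact W.smul_mem a (mem_W _)
  | add p q hp hq => rw [map_add]; exact W.add_mem (hp Submodule.mem_top) (hq Submodule.mem_top)
  | mul_X p i hp =>
      rw [map_mul]
      exact mulX i _ (hp Submodule.mem_top)


noncomputable abbrev HR1 : Type := AdjoinRoot (Polynomial.X ^ 3 : Polynomial ℚ)

noncomputable def hs1 : HR1 := AdjoinRoot.root _
noncomputable def ht1 : HR1 := (2⁻¹ : ℚ) • hs1 ^ 2

lemma hs1_cube : hs1 ^ 3 = 0 := by
  have h := AdjoinRoot.eval₂_root (Polynomial.X ^ 3 : Polynomial ℚ)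
  simpa [hs1] using h

noncomputable def hq : Polynomial HR1 :=
  Polynomial.X ^ 4 - Polynomial.C hs1 * Polynomial.X ^ 3 + Polynomial.C ht1 * Polynomial.X ^ 2

lemma hq_monic : hq.Monic := by
  unfold hq; monicity!

instance : Nontrivial HR1 :=
  AdjoinRoot.nontrivial _ (by rw [Polynomial.degree_X_pow]; norm_num)

lemma hq_natDegree : hq.natDegree = 4 := by
  unfold hq; compute_degree!

noncomputable abbrev HR2 : Type := AdjoinRoot hq

noncomputable def hx2 : HR2 := AdjoinRoot.root hq

noncomputable def φ : MvPolynomial (Fin 3) ℚ →ₐ[ℚ] HR2 :=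
  aeval ![algebraMap HR1 HR2 hs1, algebraMap HR1 HR2 ht1, hx2]

lemma φ_vanish : ∀ a ∈ Ih, φ a = 0 := by
  have hker : Ih ≤ RingHom.ker (φ : MvPolynomial (Fin 3) ℚ →+* HR2) := by
    rw [Ideal.span_le]
    rintro g hg
    simp only [Set.mem_insert_iff, Set.mem_singleton_iff] at hg
    rcases hg with rfl | rfl | rfl <;>
      simp only [SetLike.mem_coe, RingHom.mem_ker, AlgHom.coe_toRingHom,
        map_sub, map_add, map_mul, map_pow, map_ofNat, φ, aeval_X]
    · -- s² - 2t
      show (algebraMap HR1 HR2 hs1) ^ 2 - 2 * algebraMap HR1 HR2 ht1 = 0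
      rw [← map_pow, ← map_ofNat (algebraMap HR1 HR2) 2, ← map_mul, ← map_sub]
      convert map_zero (algebraMap HR1 HR2)
      rw [ht1]
      rw [show (2 : HR1) = algebraMap ℚ HR1 2 from (map_ofNat _ 2).symm, ← Algebra.smul_def,
        smul_smul]
      norm_num
    · -- st
      show algebraMap HR1 HR2 hs1 * algebraMap HR1 HR2 ht1 = 0
      rw [← map_mul]
      convert map_zero (algebraMap HR1 HR2)
      rw [ht1, mul_smul_comm, ← pow_succ', hs1_cube, smul_zero]
    · -- x⁴ - sx³ + tx²
      show hx2 ^ 4 - algebraMap HR1 HR2 hs1 * hx2 ^ 3 + algebraMap HR1 HR2 ht1 * hx2 ^ 2 = 0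
      have h := AdjoinRoot.eval₂_root hq
      rw [hq] at h
      simp [AdjoinRoot.algebraMap_eq, hx2] at h ⊢
      exact h
  intro a ha
  exact hker ha

noncomputable def φq : HR →ₐ[ℚ] HR2 := Ideal.Quotient.liftₐ Ih φ φ_vanish

lemma φq_v (a : Fin 3) (j : Fin 4) :
    φq (v (a, j)) =
      (![1, algebraMap HR1 HR2 hs1, algebraMap HR1 HR2 ht1] a) * hx2 ^ (j : ℕ) := by
  have h : φq (v (a, j)) = φ ((![1, X 0, X 1] a) * X 2 ^ (j : ℕ)) := by
    show φq (Ideal.Quotient.mk Ih ((![1, X 0, X 1] a) * X 2 ^ (j : ℕ))) = _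
    rw [φq, Ideal.Quotient.liftₐ_apply]
    rfl
  rw [h]
  fin_cases a <;> simp [φ, map_mul, map_pow, aeval_X]

noncomputable def pb1 : PowerBasis ℚ HR1 :=
  AdjoinRoot.powerBasis' (Polynomial.monic_X_pow 3)

noncomputable def pb2 : PowerBasis HR1 HR2 := AdjoinRoot.powerBasis' hq_monic

lemma pb1_dim : pb1.dim = 3 := by
  simp [pb1, AdjoinRoot.powerBasis', Polynomial.natDegree_X_pow]

lemma pb2_dim : pb2.dim = 4 := by
  simp [pb2, AdjoinRoot.powerBasis', hq_natDegree]

noncomputable def B12 : Module.Basis (Fin 3 × Fin 4) ℚ HR2 :=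
  (pb1.basis.smulTower pb2.basis).reindex
    (Equiv.prodCongr (finCongr pb1_dim) (finCongr pb2_dim))

lemma B12_apply (a : Fin 3) (j : Fin 4) :
    B12 (a, j) = hs1 ^ (a : ℕ) • hx2 ^ (j : ℕ) := by
  rw [B12, Module.Basis.reindex_apply]
  have : (Equiv.prodCongr (finCongr pb1_dim) (finCongr pb2_dim)).symm (a, j) =
      ((finCongr pb1_dim).symm a, (finCongr pb2_dim).symm j) := rfl
  rw [this, Module.Basis.smulTower_apply, pb1.basis_eq_pow, pb2.basis_eq_pow]
  have g1 : pb1.gen = hs1 := rfl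
  have g2 : pb2.gen = hx2 := rfl
  rw [g1, g2]
  norm_num

noncomputable def wu : Fin 3 × Fin 4 → ℚˣ :=
  fun k => ![1, 1, Units.mk0 (2⁻¹ : ℚ) (by norm_num)] k.1

lemma comp_eq : (φq.toLinearMap ∘ v) = fun k => wu k • B12 k := by
  funext k
  obtain ⟨a, j⟩ := k
  have h := φq_v a j
  have hb := B12_apply a j
  show φq (v (a, j)) = wu (a, j) • B12 (a, j)
  rw [h, hb]
  fin_cases a
  · show (1 : HR2) * hx2 ^ (j : ℕ) = (1 : ℚˣ) • ((hs1 ^ (0:ℕ)) • hx2 ^ (j : ℕ))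
    simp
  · show algebraMap HR1 HR2 hs1 * hx2 ^ (j : ℕ) =
      (1 : ℚˣ) • ((hs1 ^ (1:ℕ)) • hx2 ^ (j : ℕ))
    rw [one_smul, pow_one, Algebra.smul_def]
  · show algebraMap HR1 HR2 ht1 * hx2 ^ (j : ℕ) =
      (Units.mk0 (2⁻¹ : ℚ) (by norm_num)) • ((hs1 ^ (2:ℕ)) • hx2 ^ (j : ℕ))
    rw [Units.smul_def, Units.val_mk0, ← smul_assoc]
    rw [show (2⁻¹ : ℚ) • hs1 ^ 2 = ht1 from rfl, Algebra.smul_def]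

lemma v_indep : LinearIndependent ℚ v := by
  apply LinearIndependent.of_comp φq.toLinearMap
  rw [comp_eq]
  exact B12.linearIndependent.units_smul wu

noncomputable def bHR : Module.Basis (Fin 3 × Fin 4) ℚ HR := Module.Basis.mk v_indep span_v

end HopfAux

/-- The quotient `ℚ[s,t,x]/(s² - 2t, st, x⁴ - sx³ + tx²)` is a
`12`-dimensional `ℚ`-vector space, with basis the images of the twelve elements
`x^j, s·x^j, t·x^j` for `0 ≤ j ≤ 3`. -/
theorem hopfRing_dimension :
    Module.finrank ℚ HopfRing = 12 ∧
    ∃ b : Module.Basis (Fin 3 × Fin 4) ℚ HopfRing,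
      ∀ (i : Fin 3) (j : Fin 4),
        b (i, j) = Ideal.Quotient.mk _
          ((![1, X 0, X 1] i : MvPolynomial (Fin 3) ℚ) * X 2 ^ (j : ℕ)) := by
  constructor
  · rw [Module.finrank_eq_card_basis HopfAux.bHR]
    simp
  · exact ⟨HopfAux.bHR, fun i j => by rw [HopfAux.bHR, Module.Basis.mk_apply]; rfl⟩
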